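/- Let Y⁰ = {y ∈ ℝ^m : ‖Aᵀy‖_∞ ≤ 1} for a real m×n matrix A, and let F be a nonempty convex subset of Y⁰. Define 𝒜⁺(F) = {i : A_iᵀy = 1 for all y ∈ F}, 𝒜⁻(F) = {i : A_iᵀy = −1 for all y ∈ F}, and 𝒜⁰(F) = {i : −1 < A_iᵀy < 1 for some y ∈ F}. Then (𝒜⁺(F), 𝒜⁰(F), 𝒜⁻(F)) is a partition of the index set {1,…,n}. -/
import Mathlib


open Set

noncomputable section

variable {m n : ℕ}

/-- Euclidean distance between two vectors. -/
def en {k : ℕ} (x x' : Fin k → ℝ) : ℝ := Real.sqrt (∑ i, (x i - x' i) ^ 2)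

/-- The ℓ₁ norm. -/
def l1 {k : ℕ} (x : Fin k → ℝ) : ℝ := ∑ i, |x i|

/-- Squared Euclidean norm. -/
def sqnorm {k : ℕ} (y : Fin k → ℝ) : ℝ := ∑ i, (y i) ^ 2

/-- `A_iᵀ y`, the dot product of the `i`-th column of `A` with `y`. -/
def colDot (A : Matrix (Fin m) (Fin n) ℝ) (i : Fin n) (y : Fin m → ℝ) : ℝ := ∑ k, A k i * y k

/-- The dual feasible set `Y⁰ = {y : ‖Aᵀy‖_∞ ≤ 1}`. -/
def Ydual (A : Matrix (Fin m) (Fin n) ℝ) : Set (Fin m → ℝ) := {y | ∀ i, |colDot A i y| ≤ 1}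

/-- `F` is a face of `C`: the argmax set of a linear functional over `C`. -/
def IsFaceOf (C F : Set (Fin m → ℝ)) : Prop :=
  ∃ v : Fin m → ℝ, F = {y | y ∈ C ∧ ∀ z ∈ C, ∑ k, v k * z k ≤ ∑ k, v k * y k}

/-- `𝒜⁺(F)`. -/
def Aplus (A : Matrix (Fin m) (Fin n) ℝ) (F : Set (Fin m → ℝ)) : Set (Fin n) :=
  {i | ∀ y ∈ F, colDot A i y = 1}

/-- `𝒜⁻(F)`. -/
def Aminus (A : Matrix (Fin m) (Fin n) ℝ) (F : Set (Fin m → ℝ)) : Set (Fin n) :=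
  {i | ∀ y ∈ F, colDot A i y = -1}

/-- `𝒜⁰(F)`. -/
def Azero (A : Matrix (Fin m) (Fin n) ℝ) (F : Set (Fin m → ℝ)) : Set (Fin n) :=
  {i | ∃ y ∈ F, -1 < colDot A i y ∧ colDot A i y < 1}

/-- Solution set of the extended ℓ₁ regularization problem:
basis pursuit when `lam = 0`, Lasso-type problem when `lam > 0`. -/
def Sol (A : Matrix (Fin m) (Fin n) ℝ) (lam : ℝ) (b : Fin m → ℝ) : Set (Fin n → ℝ) :=
  if lam = 0 then
    {x | A.mulVec x = b ∧ ∀ z, A.mulVec z = b → l1 x ≤ l1 z}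
  else
    {x | ∀ z, l1 x + 1 / (2 * lam) * sqnorm (A.mulVec x - b) ≤
          l1 z + 1 / (2 * lam) * sqnorm (A.mulVec z - b)}

/-- Graph of the solution multifunction `S`. -/
def gphS (A : Matrix (Fin m) (Fin n) ℝ) : Set (ℝ × (Fin m → ℝ) × (Fin n → ℝ)) :=
  {p | 0 ≤ p.1 ∧ p.2.2 ∈ Sol A p.1 p.2.1}

/-- `A_iᵀ(b − Ax)`. -/
def resid (A : Matrix (Fin m) (Fin n) ℝ) (b : Fin m → ℝ) (x : Fin n → ℝ) (i : Fin n) : ℝ :=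
  colDot A i (b - A.mulVec x)

/-- The polyhedral cone `S_F` associated with a face `F` of `Y⁰`. -/
def SFace (A : Matrix (Fin m) (Fin n) ℝ) (F : Set (Fin m → ℝ)) :
    Set (ℝ × (Fin m → ℝ) × (Fin n → ℝ)) :=
  {p | 0 ≤ p.1 ∧
    (∀ i ∈ Aplus A F, 0 ≤ p.2.2 i ∧ resid A p.2.1 p.2.2 i = p.1) ∧
    (∀ i ∈ Azero A F, p.2.2 i = 0 ∧ |resid A p.2.1 p.2.2 i| ≤ p.1) ∧
    (∀ i ∈ Aminus A F, p.2.2 i ≤ 0 ∧ resid A p.2.1 p.2.2 i = -p.1)}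

/-- `cl W(I⁺, I⁰, I⁻)`. -/
def clW (Ip I0 Im : Set (Fin n)) : Set (Fin n → ℝ) :=
  {x | (∀ i ∈ Ip, 0 ≤ x i) ∧ (∀ i ∈ I0, x i = 0) ∧ (∀ i ∈ Im, x i ≤ 0)}

/-- `W(I⁺, I⁰, I⁻)`. -/
def Wset (Ip I0 Im : Set (Fin n)) : Set (Fin n → ℝ) :=
  {x | (∀ i ∈ Ip, 0 < x i) ∧ (∀ i ∈ I0, x i = 0) ∧ (∀ i ∈ Im, x i < 0)}

/-- The projection `D_F` of `S_F` onto the `(λ, b)` coordinates. -/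
def DFace (A : Matrix (Fin m) (Fin n) ℝ) (F : Set (Fin m → ℝ)) : Set (ℝ × (Fin m → ℝ)) :=
  (fun p => (p.1, p.2.1)) '' SFace A F

/-- The convex subdifferential of the ℓ₁ norm. -/
def l1subdiff {k : ℕ} (x : Fin k → ℝ) : Set (Fin k → ℝ) :=
  {v | ∀ z, l1 x + ∑ i, v i * (z i - x i) ≤ l1 z}

/-- Polyhedral subset of `ℝ × ℝ^m × ℝ^n`: a finite intersection of closed half-spaces. -/
def IsPolyhedral3 (s : Set (ℝ × (Fin m → ℝ) × (Fin n → ℝ))) : Prop :=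
  ∃ (k : ℕ) (a : Fin k → ℝ × (Fin m → ℝ) × (Fin n → ℝ)) (β : Fin k → ℝ),
    s = {p | ∀ j, (a j).1 * p.1 + (∑ t, (a j).2.1 t * p.2.1 t) +
          (∑ t, (a j).2.2 t * p.2.2 t) ≤ β j}

/-- Lipschitz continuity of a set-valued map on a set `X`, with constant `κ`. -/
def LipOn {a b : ℕ} (G : (Fin a → ℝ) → Set (Fin b → ℝ)) (X : Set (Fin a → ℝ)) (κ : ℝ) : Prop :=
  (∀ x ∈ X, (G x).Nonempty ∧ IsClosed (G x)) ∧
  ∀ x ∈ X, ∀ x' ∈ X, ∀ y' ∈ G x', ∃ y ∈ G x, en y' y ≤ κ * en x' x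

end

theorem stmt2 {m n : ℕ} (A : Matrix (Fin m) (Fin n) ℝ)
    (F : Set (Fin m → ℝ)) (hne : F.Nonempty) (hconv : Convex ℝ F) (hsub : F ⊆ Ydual A) :
    (Aplus A F ∩ Azero A F = ∅) ∧ (Aplus A F ∩ Aminus A F = ∅) ∧
    (Azero A F ∩ Aminus A F = ∅) ∧ (Aplus A F ∪ Azero A F ∪ Aminus A F = univ) := by
  obtain ⟨y0, hy0⟩ := hne
  have hlin : ∀ (i : Fin n) (a b : ℝ) (y1 y2 : Fin m → ℝ),
      colDot A i (a • y1 + b • y2) = a * colDot A i y1 + b * colDot A i y2 := by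
    intro i a b y1 y2
    simp only [colDot, Pi.add_apply, Pi.smul_apply, smul_eq_mul]
    rw [Finset.mul_sum, Finset.mul_sum, ← Finset.sum_add_distrib]
    exact Finset.sum_congr rfl fun k _ => by ring
  refine ⟨?_, ?_, ?_, ?_⟩
  · ext i
    simp only [mem_inter_iff, mem_empty_iff_false, iff_false, not_and]
    rintro hp ⟨y, hy, h1, h2⟩
    have := hp y hy; linarith
  · ext i
    simp only [mem_inter_iff, mem_empty_iff_false, iff_false, not_and]
    intro hp hm
    have h1 := hp y0 hy0; have h2 := hm y0 hy0; linarith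
  · ext i
    simp only [mem_inter_iff, mem_empty_iff_false, iff_false, not_and]
    rintro ⟨y, hy, h1, h2⟩ hm
    have := hm y hy; linarith
  · ext i
    simp only [mem_union, mem_univ, iff_true]
    by_cases hp : i ∈ Aplus A F
    · exact Or.inl (Or.inl hp)
    by_cases hm : i ∈ Aminus A F
    · exact Or.inr hm
    refine Or.inl (Or.inr ?_)
    simp only [Aplus, mem_setOf_eq, not_forall] at hp
    simp only [Aminus, mem_setOf_eq, not_forall] at hm
    obtain ⟨y1, hy1, h1⟩ := hp
    obtain ⟨y2, hy2, h2⟩ := hm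
    have b1 := abs_le.mp ((hsub hy1) i)
    have b2 := abs_le.mp ((hsub hy2) i)
    rcases lt_or_eq_of_le b1.1 with hlt | heq
    · exact ⟨y1, hy1, hlt, lt_of_le_of_ne b1.2 h1⟩
    rcases lt_or_eq_of_le b2.2 with hlt | heq2
    · exact ⟨y2, hy2, lt_of_le_of_ne' b2.1 h2, hlt⟩
    refine ⟨(1/2 : ℝ) • y1 + (1/2 : ℝ) • y2,
      hconv hy1 hy2 (by norm_num) (by norm_num) (by norm_num), ?_⟩
    rw [hlin i (1/2) (1/2) y1 y2, ← heq, heq2]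
    norm_num
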